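/- Completeness of the abstraction with respect to the policy automaton: for any language L ⊆ Σ^{≤ω}, γ_{≤ω}(α_{≤ω}(L)) ⊆ L(𝔄) if and only if L ⊆ L(𝔄), where L(𝔄) is the set of finite words accepted as NFA plus infinite words accepted as Büchi automaton. -/

import Mathlib

variable {Q : Type*} {A : Type*}

/-- Reachability in a nondeterministic automaton: `q` is reachable from `p` reading `w`. -/
def Reach (δ : Q → A → Set Q) : Q → List A → Q → Prop
  | p, [], q => p = q
  | p, a :: w, q => ∃ r ∈ δ p a, Reach δ r w q

/-- Reachability visiting some final state along the way (possibly the endpoints). -/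
def ReachF (δ : Q → A → Set Q) (Fs : Set Q) (p : Q) (w : List A) (q : Q) : Prop :=
  ∃ u v r, w = u ++ v ∧ r ∈ Fs ∧ Reach δ p u r ∧ Reach δ r v q

/-- The relation ∼ : `w ∼ u` iff for all states `p q`, reachability and
reachability-through-final-states via `w` and via `u` coincide. -/
def Sim (δ : Q → A → Set Q) (Fs : Set Q) (w u : List A) : Prop :=
  ∀ p q : Q, (Reach δ p w q ↔ Reach δ p u q) ∧ (ReachF δ Fs p w q ↔ ReachF δ Fs p u q)

/-- The class of a word in 𝒬 = Σ⁺/∼ ⊎ {[ε]} : for a nonempty word its ∼-class,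
and `[ε] = {ε}` for the empty word. -/
def wordClass (δ : Q → A → Set Q) (Fs : Set Q) (w : List A) : Set (List A) :=
  {u | (w = [] ∧ u = []) ∨ (w ≠ [] ∧ u ≠ [] ∧ Sim δ Fs w u)}

/-- `C` is an element of 𝒬. -/
def IsClass (δ : Q → A → Set Q) (Fs : Set Q) (C : Set (List A)) : Prop :=
  ∃ w : List A, C = wordClass δ Fs w

/-- Elementwise concatenation of languages of finite words. -/
def mulSet (L M : Set (List A)) : Set (List A) := Set.image2 (· ++ ·) L M

/-- Monoid multiplication of classes: the class of the concatenation of representatives. -/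
def classMul (δ : Q → A → Set Q) (Fs : Set Q) (C D : Set (List A)) : Set (List A) :=
  {v | ∃ w ∈ C, ∃ u ∈ D, v ∈ wordClass δ Fs (w ++ u)}

/-- Finite star of a language. -/
def starSet (L : Set (List A)) : Set (List A) :=
  {w | ∃ l : List (List A), (∀ u ∈ l, u ∈ L) ∧ w = l.flatten}

/-- Possibly infinite words over `A` : Σ^{≤ω}, as stable `Option`-valued streams. -/
def Word (A : Type*) : Type _ := {g : ℕ → Option A // ∀ n, g n = none → g (n + 1) = none}

/-- A finite word as an element of Σ^{≤ω}. -/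
def ofList (w : List A) : Word A :=
  ⟨fun n => w[n]?, fun n h => by
    rw [List.getElem?_eq_none_iff] at *
    omega⟩

/-- An infinite word as an element of Σ^{≤ω}. -/
def ofStream (s : ℕ → A) : Word A := ⟨fun n => some (s n), fun n h => by simp at h⟩

/- The (possibly infinite) concatenation `f 0 · f 1 · f 2 ⋯` of a sequence of finite
words, as an element of Σ^{≤ω}. -/
open Classical in
noncomputable def prodWord (f : ℕ → List A) : Word A :=
  ⟨fun n =>
    if h : ∃ k, n < ((List.range k).flatMap f).length then
      ((List.range h.choose).flatMap f)[n]?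
    else none, by
    intro n hn
    dsimp only at hn ⊢
    by_cases h : ∃ k, n < ((List.range k).flatMap f).length
    · exfalso
      rw [dif_pos h, List.getElem?_eq_none_iff] at hn
      have := h.choose_spec
      omega
    · have h2 : ¬ ∃ k, n + 1 < ((List.range k).flatMap f).length := by
        push_neg at h ⊢
        intro k
        have := h k
        omega
      rw [dif_neg h2]⟩

/-- Concatenation of a finite word with a possibly infinite word. -/
def catWord (u : List A) (w : Word A) : Word A :=
  ⟨fun n => if n < u.length then u[n]? else w.1 (n - u.length), by
    intro n hn
    dsimp only at hn ⊢
    by_cases h : n < u.length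
    · exfalso
      rw [if_pos h, List.getElem?_eq_none_iff] at hn
      omega
    · rw [if_neg h] at hn
      have h2 : ¬ n + 1 < u.length := by omega
      rw [if_neg h2]
      have h3 : n + 1 - u.length = (n - u.length) + 1 := by omega
      rw [h3]
      exact w.2 _ hn⟩

/-- `CD^ω` : all words `w₀w₁w₂⋯` with `w₀ ∈ C` and `wᵢ ∈ D` for `i ≥ 1`. -/
def omegaProd (C D : Set (List A)) : Set (Word A) :=
  {w | ∃ f : ℕ → List A, f 0 ∈ C ∧ (∀ i, 1 ≤ i → f i ∈ D) ∧ w = prodWord f}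

/-- `L^ω` : all words `w₁w₂w₃⋯` with all `wᵢ ∈ L`. -/
def omegaPow (L : Set (List A)) : Set (Word A) :=
  {w | ∃ f : ℕ → List A, (∀ i, f i ∈ L) ∧ w = prodWord f}

/-- Acceptance of a finite word (as an NFA). -/
def NFAAccepts (δ : Q → A → Set Q) (q0 : Q) (Fs : Set Q) (w : List A) : Prop :=
  ∃ q ∈ Fs, Reach δ q0 w q

/-- Büchi acceptance of an infinite word: a run from `q0` visiting `Fs` infinitely often. -/
def BuchiAccepts (δ : Q → A → Set Q) (q0 : Q) (Fs : Set Q) (s : ℕ → A) : Prop :=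
  ∃ r : ℕ → Q, r 0 = q0 ∧ (∀ n, r (n + 1) ∈ δ (r n) (s n)) ∧ {n | r n ∈ Fs}.Infinite

/-- The language `L(𝔄) ⊆ Σ^{≤ω}` of the extended Büchi automaton: finite words accepted
as an NFA together with infinite words accepted as a Büchi automaton. -/
def LangOf (δ : Q → A → Set Q) (q0 : Q) (Fs : Set Q) : Set (Word A) :=
  {w | (∃ l : List A, w = ofList l ∧ NFAAccepts δ q0 Fs l) ∨
       (∃ s : ℕ → A, w = ofStream s ∧ BuchiAccepts δ q0 Fs s)}

/-- The set 𝒬 of classes, as a type. -/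
def QClass (δ : Q → A → Set Q) (Fs : Set Q) : Type _ := {C : Set (List A) // IsClass δ Fs C}

/-- The set 𝓒 of pairs `(C, D)` of classes with `CD = C` and `DD = D`, as a type. -/
def CPair (δ : Q → A → Set Q) (Fs : Set Q) : Type _ :=
  {p : Set (List A) × Set (List A) //
    IsClass δ Fs p.1 ∧ IsClass δ Fs p.2 ∧
    classMul δ Fs p.1 p.2 = p.1 ∧ classMul δ Fs p.2 p.2 = p.2}

/-- The language `CD^ω` denoted by an element of 𝓒. -/
def concPair {δ : Q → A → Set Q} {Fs : Set Q} (p : CPair δ Fs) : Set (Word A) :=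
  omegaProd p.1.1 p.1.2

/-- A subset 𝒱 ⊆ 𝓒 is closed: whenever `UV^ω ∩ CD^ω ≠ ∅` for `(C,D) ∈ 𝒱` and
`(U,V) ∈ 𝓒`, then `(U,V) ∈ 𝒱`. -/
def IsClosedC {δ : Q → A → Set Q} {Fs : Set Q} (𝒱 : Set (CPair δ Fs)) : Prop :=
  ∀ p ∈ 𝒱, ∀ q : CPair δ Fs, (concPair q ∩ concPair p).Nonempty → q ∈ 𝒱

/-- Pre-abstraction 𝔣. -/
def frakF (δ : Q → A → Set Q) (Fs : Set Q) (V : Set (Word A)) : Set (CPair δ Fs) :=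
  {p | (concPair p ∩ V).Nonempty}

/-- Pre-concretization 𝔤. -/
def frakG {δ : Q → A → Set Q} {Fs : Set Q} (𝒱 : Set (CPair δ Fs)) : Set (Word A) :=
  ⋃ p ∈ 𝒱, concPair p

/-- Closure 𝔠(𝒱) = ⋃_{n ≥ 1} (𝔣 ∘ 𝔤)ⁿ(𝒱). -/
def frakC {δ : Q → A → Set Q} {Fs : Set Q} (𝒱 : Set (CPair δ Fs)) : Set (CPair δ Fs) :=
  ⋃ n : ℕ, (fun 𝒲 => frakF δ Fs (frakG 𝒲))^[n + 1] 𝒱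

/-- Abstraction α_* -/
def alphaStar (δ : Q → A → Set Q) (Fs : Set Q) (U : Set (List A)) : Set (QClass δ Fs) :=
  {C | (C.1 ∩ U).Nonempty}

/-- Concretization γ_* -/
def gammaStar {δ : Q → A → Set Q} {Fs : Set Q} (𝒰 : Set (QClass δ Fs)) : Set (List A) :=
  ⋃ C ∈ 𝒰, C.1

/-- Abstraction α_{≤ω}. -/
def alphaOmega (δ : Q → A → Set Q) (Fs : Set Q) (V : Set (Word A)) : Set (CPair δ Fs) :=
  frakC (frakF δ Fs V)

/-- Concretization γ_{≤ω}. -/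
def gammaOmega {δ : Q → A → Set Q} {Fs : Set Q} (𝒱 : Set (CPair δ Fs)) : Set (Word A) :=
  frakG 𝒱

section Aux
variable {δ : Q → A → Set Q} {Fs : Set Q} {q0 : Q}

/-! Section 1 : Reach basics -/

variable {δ : Q → A → Set Q} {Fs : Set Q}

theorem reach_nil {p q : Q} : Reach δ p ([] : List A) q ↔ p = q := Iff.rfl

theorem reach_append {u v : List A} {p q : Q} :
    Reach δ p (u ++ v) q ↔ ∃ r, Reach δ p u r ∧ Reach δ r v q := by
  induction u generalizing p with
  | nil => simp [Reach]
  | cons a w ih =>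
    simp only [List.cons_append, Reach]
    constructor
    · rintro ⟨r, hr, h⟩
      obtain ⟨t, h1, h2⟩ := ih.1 h
      exact ⟨t, ⟨r, hr, h1⟩, h2⟩
    · rintro ⟨t, ⟨r, hr, h1⟩, h2⟩
      exact ⟨r, hr, ih.2 ⟨t, h1, h2⟩⟩

theorem reachF_append_of_left {u v : List A} {p r q : Q}
    (h1 : ReachF δ Fs p u r) (h2 : Reach δ r v q) : ReachF δ Fs p (u ++ v) q := by
  obtain ⟨x, y, rf, rfl, hrf, ha, hb⟩ := h1
  exact ⟨x, y ++ v, rf, by simp, hrf, ha, reach_append.2 ⟨r, hb, h2⟩⟩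

theorem reachF_append_of_right {u v : List A} {p r q : Q}
    (h1 : Reach δ p u r) (h2 : ReachF δ Fs r v q) : ReachF δ Fs p (u ++ v) q := by
  obtain ⟨x, y, rf, rfl, hrf, ha, hb⟩ := h2
  exact ⟨u ++ x, y, rf, by simp, hrf, reach_append.2 ⟨r, h1, ha⟩, hb⟩

theorem reachF_append {u v : List A} {p q : Q} :
    ReachF δ Fs p (u ++ v) q ↔
      ∃ r, (ReachF δ Fs p u r ∧ Reach δ r v q) ∨ (Reach δ p u r ∧ ReachF δ Fs r v q) := by
  constructor
  · rintro ⟨x, y, rf, hxy, hrf, ha, hb⟩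
    rcases List.append_eq_append_iff.1 hxy.symm with ⟨m, rfl, rfl⟩ | ⟨m, rfl, rfl⟩
    ·
      obtain ⟨r, h1, h2⟩ := reach_append.1 hb
      exact ⟨r, Or.inl ⟨⟨x, m, rf, rfl, hrf, ha, h1⟩, h2⟩⟩
    · obtain ⟨r, h1, h2⟩ := reach_append.1 ha
      exact ⟨r, Or.inr ⟨h1, ⟨m, y, rf, rfl, hrf, h2, hb⟩⟩⟩
  · rintro ⟨r, ⟨h1, h2⟩ | ⟨h1, h2⟩⟩
    · exact reachF_append_of_left h1 h2
    · exact reachF_append_of_right h1 h2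

/-! Section 2 : Sim and wordClass -/

theorem sim_refl (w : List A) : Sim δ Fs w w := fun _ _ => ⟨Iff.rfl, Iff.rfl⟩

theorem sim_symm {w u : List A} (h : Sim δ Fs w u) : Sim δ Fs u w :=
  fun p q => ⟨(h p q).1.symm, (h p q).2.symm⟩

theorem sim_trans {w u v : List A} (h : Sim δ Fs w u) (h' : Sim δ Fs u v) : Sim δ Fs w v :=
  fun p q => ⟨(h p q).1.trans (h' p q).1, (h p q).2.trans (h' p q).2⟩

theorem sim_append {w w' u u' : List A} (h : Sim δ Fs w w') (h' : Sim δ Fs u u') :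
    Sim δ Fs (w ++ u) (w' ++ u') := by
  intro p q
  constructor
  · rw [reach_append, reach_append]
    exact exists_congr fun r => and_congr ((h p r).1) ((h' r q).1)
  · rw [reachF_append, reachF_append]
    exact exists_congr fun r =>
      or_congr (and_congr ((h p r).2) ((h' r q).1)) (and_congr ((h p r).1) ((h' r q).2))

theorem mem_wordClass_self (w : List A) : w ∈ wordClass δ Fs w := by
  rcases eq_or_ne w [] with rfl | h
  · exact Or.inl ⟨rfl, rfl⟩
  · exact Or.inr ⟨h, h, sim_refl w⟩

theorem wordClass_nil : wordClass δ Fs ([] : List A) = {[]} := by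
  ext u; simp [wordClass]

/-- members of a class behave identically -/
theorem mem_wordClass_congr {w u v : List A} (hu : u ∈ wordClass δ Fs w)
    (hv : v ∈ wordClass δ Fs w) : ∀ p q : Q,
    (Reach δ p u q ↔ Reach δ p v q) ∧ (ReachF δ Fs p u q ↔ ReachF δ Fs p v q) := by
  rcases hu with ⟨hnil, rfl⟩ | ⟨hw, _, hsu⟩
  · rcases hv with ⟨_, rfl⟩ | ⟨hw, _, _⟩
    · exact fun p q => ⟨Iff.rfl, Iff.rfl⟩
    · exact absurd hnil hw
  · rcases hv with ⟨h, _⟩ | ⟨_, _, hsv⟩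
    · exact absurd h hw
    · exact sim_trans (sim_symm hsu) hsv

theorem wordClass_eq_of_mem {w u : List A} (hu : u ∈ wordClass δ Fs w) :
    wordClass δ Fs u = wordClass δ Fs w := by
  rcases hu with ⟨rfl, rfl⟩ | ⟨hw, hu, hs⟩
  · rfl
  · ext v
    simp only [wordClass, Set.mem_setOf_eq, hw, hu, false_and, false_or, ne_eq,
      not_false_eq_true, true_and]
    exact and_congr_right fun _ => ⟨sim_trans hs, sim_trans (sim_symm hs)⟩

theorem classMul_wordClass (w u : List A) :
    classMul δ Fs (wordClass δ Fs w) (wordClass δ Fs u) = wordClass δ Fs (w ++ u) := by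
  ext v
  constructor
  · rintro ⟨w', hw', u', hu', hv⟩
    have : wordClass δ Fs (w' ++ u') = wordClass δ Fs (w ++ u) := by
      rcases eq_or_ne w [] with rfl | hw
      · rw [wordClass_nil] at hw'
        rcases hw'
        rcases eq_or_ne u [] with rfl | hu
        · rw [wordClass_nil] at hu'; rcases hu'; rfl
        · simpa using wordClass_eq_of_mem hu'
      · rcases eq_or_ne u [] with rfl | hu
        · rw [wordClass_nil] at hu'
          rcases hu'
          simpa using wordClass_eq_of_mem hw'
        · rcases hw' with ⟨h, _⟩ | ⟨_, hw'ne, hsw⟩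
          · exact absurd h hw
          rcases hu' with ⟨h, _⟩ | ⟨_, hu'ne, hsu⟩
          · exact absurd h hu
          have : Sim δ Fs (w ++ u) (w' ++ u') := sim_append hsw hsu
          apply wordClass_eq_of_mem
          exact Or.inr ⟨by simp [hw], by simp [hw'ne], this⟩
    rwa [this] at hv
  · intro hv
    exact ⟨w, mem_wordClass_self w, u, mem_wordClass_self u, hv⟩

theorem mem_of_append_mem {C D : Set (List A)} (hC : IsClass δ Fs C) (hD : IsClass δ Fs D)
    (hCD : classMul δ Fs C D = C) {u v : List A} (hu : u ∈ C) (hv : v ∈ D) : u ++ v ∈ C := by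
  rw [← hCD]
  exact ⟨u, hu, v, hv, mem_wordClass_self _⟩

/-- dichotomy : a class containing `[]` is `{[]}` ; otherwise all members are nonempty. -/
theorem class_nil_or {C : Set (List A)} (hC : IsClass δ Fs C) :
    C = {([] : List A)} ∨ ∀ u ∈ C, u ≠ [] := by
  obtain ⟨w, rfl⟩ := hC
  rcases eq_or_ne w [] with rfl | hw
  · exact Or.inl wordClass_nil
  · right
    rintro u (⟨h, _⟩ | ⟨_, hu, _⟩)
    · exact absurd h hw
    · exact hu

theorem word_ext {w w' : Word A} (h : ∀ n, w.1 n = w'.1 n) : w = w' :=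
  Subtype.ext (funext h)

/-- the segment `s a ⋯ s (b-1)` of a stream -/
def seg (s : ℕ → A) (a b : ℕ) : List A := (List.range' a (b - a)).map s

@[simp] theorem seg_length (s : ℕ → A) (a b : ℕ) : (seg s a b).length = b - a := by
  simp [seg]

theorem seg_getElem (s : ℕ → A) {a b k : ℕ} (h : k < b - a) :
    (seg s a b)[k]'(by simpa using h) = s (a + k) := by
  simp [seg, List.getElem_range']

theorem seg_append (s : ℕ → A) {a b c : ℕ} (hab : a ≤ b) (hbc : b ≤ c) :
    seg s a b ++ seg s b c = seg s a c := by
  unfold seg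
  rw [← List.map_append]
  congr 1
  have e := List.range'_append (s := a) (m := b-a) (n := c-b) (step := 1)
  rw [show a + 1*(b-a) = b by omega] at e
  rw [e]
  congr 1
  omega

theorem seg_cons (s : ℕ → A) {a b : ℕ} (h : a < b) :
    seg s a b = s a :: seg s (a+1) b := by
  unfold seg
  have : b - a = (b - (a+1)) + 1 := by omega
  rw [this, List.range'_succ]
  simp

/-- boundary of the `k`-th block -/
def bnd (f : ℕ → List A) (k : ℕ) : ℕ := ((List.range k).flatMap f).length

theorem bnd_succ (f : ℕ → List A) (k : ℕ) : bnd f (k+1) = bnd f k + (f k).length := by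
  unfold bnd
  rw [List.range_succ, List.flatMap_append]
  simp

theorem bnd_mono (f : ℕ → List A) : Monotone (bnd f) := by
  apply monotone_nat_of_le_succ
  intro k
  rw [bnd_succ]
  omega

theorem flatMap_range_add (f : ℕ → List A) (i m : ℕ) (h : i ≤ m) :
    ∃ t, (List.range m).flatMap f = (List.range i).flatMap f ++ t := by
  obtain ⟨d, rfl⟩ : ∃ d, m = i + d := ⟨m - i, by omega⟩
  rw [List.range_add, List.flatMap_append]
  exact ⟨_, rfl⟩

theorem flatMap_getElem? (f : ℕ → List A) {i m n : ℕ} (h1 : bnd f i ≤ n) (h2 : n < bnd f (i+1))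
    (hm : i < m) : ((List.range m).flatMap f)[n]? = (f i)[n - bnd f i]? := by
  obtain ⟨t, ht⟩ := flatMap_range_add f (i+1) m hm
  rw [ht]
  rw [List.getElem?_append_left h2]
  have : (List.range (i+1)).flatMap f = (List.range i).flatMap f ++ f i := by
    rw [List.range_succ, List.flatMap_append]; simp
  rw [this, List.getElem?_append_right h1]
  rfl

open Classical in
theorem prodWord_apply (f : ℕ → List A) (n : ℕ) :
    (prodWord f).1 n = if h : ∃ k, n < ((List.range k).flatMap f).length then
      ((List.range h.choose).flatMap f)[n]? else none := rfl

theorem prodWord_apply_of_lt (f : ℕ → List A) {n m : ℕ} (h : n < bnd f m) :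
    (prodWord f).1 n = ((List.range m).flatMap f)[n]? := by
  have hex : ∃ k, n < ((List.range k).flatMap f).length := ⟨m, h⟩
  rw [prodWord_apply, dif_pos hex]
  have hc := hex.choose_spec
  -- both indices valid : getElem? agree since one flatMap is prefix of the other
  rcases le_total hex.choose m with hle | hle
  · obtain ⟨t, ht⟩ := flatMap_range_add f hex.choose m hle
    rw [ht, List.getElem?_append_left hc]
  · obtain ⟨t, ht⟩ := flatMap_range_add f m hex.choose hle
    rw [ht, List.getElem?_append_left h]

theorem prodWord_apply_of_ge (f : ℕ → List A) {n : ℕ}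
    (h : ¬ ∃ k, n < ((List.range k).flatMap f).length) : (prodWord f).1 n = none := by
  rw [prodWord_apply, dif_neg h]

/-- block value lemma -/
theorem prodWord_apply_block (f : ℕ → List A) {i n : ℕ} (h1 : bnd f i ≤ n)
    (h2 : n < bnd f (i+1)) : (prodWord f).1 n = (f i)[n - bnd f i]? := by
  rw [prodWord_apply_of_lt f (m := i+1) h2]
  exact flatMap_getElem? f h1 h2 (Nat.lt_succ_self i)

theorem prodWord_eq_ofList (f : ℕ → List A) (hf : ∀ i, 1 ≤ i → f i = []) :
    prodWord f = ofList (f 0) := by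
  have hb : ∀ k, 1 ≤ k → bnd f k = (f 0).length := by
    intro k hk
    induction k with
    | zero => omega
    | succ j ih =>
      rcases Nat.eq_or_lt_of_le hk with h | h
      · have : j = 0 := by omega
        subst this
        rw [bnd_succ]; simp [bnd]
      · rw [bnd_succ, ih (by omega), hf j (by omega)]
        simp
  apply word_ext
  intro n
  show (prodWord f).1 n = (f 0)[n]?
  by_cases hn : n < (f 0).length
  · rw [prodWord_apply_of_lt f (m := 1) (by rw [hb 1 le_rfl]; exact hn)]
    have : (List.range 1).flatMap f = f 0 := by
      have h1 : List.range 1 = [0] := rfl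
      rw [h1, List.flatMap_cons, List.flatMap_nil, List.append_nil]
    rw [this]
  · rw [prodWord_apply_of_ge, eq_comm, List.getElem?_eq_none_iff]
    · omega
    · push_neg
      intro k
      show ((List.range k).flatMap f).length ≤ n
      rcases Nat.eq_zero_or_pos k with rfl | hk
      · simp
      · have h2 : ((List.range k).flatMap f).length = (f 0).length := hb k hk
        omega

theorem bnd_lower (f : ℕ → List A) (hf : ∀ i, 1 ≤ i → f i ≠ []) (k : ℕ) :
    k ≤ bnd f (k+1) := by
  induction k with
  | zero => omega
  | succ j ih =>
    rw [bnd_succ]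
    have := hf (j+1) (by omega)
    have : (f (j+1)).length ≥ 1 := by
      cases h : f (j+1) with
      | nil => exact absurd h this
      | cons a l => simp
    omega

theorem prodWord_eq_ofStream (f : ℕ → List A) (hf : ∀ i, 1 ≤ i → f i ≠ []) :
    ∃ s : ℕ → A, prodWord f = ofStream s ∧
      ∀ i k, k < (f i).length → (prodWord f).1 (bnd f i + k) = some (s (bnd f i + k)) ∧
        (f i)[k]? = some (s (bnd f i + k)) := by
  have hex : ∀ n, ∃ a, (prodWord f).1 n = some a := by
    intro n
    have h : n < bnd f (n+2) := by
      have := bnd_lower f hf (n+1)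
      have h2 := bnd_succ f (n+1)
      calc n < n + 1 := by omega
        _ ≤ bnd f (n+2) := bnd_lower f hf (n+1)
    rw [prodWord_apply_of_lt f h]
    exact ⟨_, List.getElem?_eq_getElem h⟩
  choose s hs using hex
  refine ⟨s, word_ext fun n => (hs n), ?_⟩
  intro i k hk
  have h1 : bnd f i ≤ bnd f i + k := by omega
  have h2 : bnd f i + k < bnd f (i+1) := by rw [bnd_succ]; omega
  have := prodWord_apply_block f h1 h2
  rw [hs _] at this
  refine ⟨hs _, ?_⟩
  rw [show bnd f i + k - bnd f i = k by omega] at this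
  exact this.symm

theorem ofList_mem_LangOf {δ : Q → A → Set Q} {q0 : Q} {Fs : Set Q} {l : List A} :
    ofList l ∈ LangOf δ q0 Fs ↔ NFAAccepts δ q0 Fs l := by
  constructor
  · rintro (⟨l', hl, h⟩ | ⟨s, hs, _⟩)
    · have : l = l' := by
        apply List.ext_getElem?
        intro n
        exact congrFun (congrArg Subtype.val hl) n
      rwa [this]
    · exfalso
      have := congrFun (congrArg Subtype.val hs) l.length
      simp [ofList, ofStream] at this
  · intro h
    exact Or.inl ⟨l, rfl, h⟩

theorem ofStream_mem_LangOf {δ : Q → A → Set Q} {q0 : Q} {Fs : Set Q} {s : ℕ → A} :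
    ofStream s ∈ LangOf δ q0 Fs ↔ BuchiAccepts δ q0 Fs s := by
  constructor
  · rintro (⟨l, hl, _⟩ | ⟨s', hs, h⟩)
    · exfalso
      have := congrFun (congrArg Subtype.val hl) l.length
      simp [ofList, ofStream] at this
    · have : s = s' := by
        funext n
        have := congrFun (congrArg Subtype.val hs) n
        simpa [ofStream] using this
      rwa [this]
  · intro h
    exact Or.inr ⟨s, rfl, h⟩

/-! Section 4 : runs -/

variable {q0 : Q}

/-- from `Reach` to a finite run (constant after the end) -/
theorem run_of_reach {p q : Q} {u : List A} (h : Reach δ p u q) :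
    ∃ r : ℕ → Q, r 0 = p ∧ (∀ n, u.length ≤ n → r n = q) ∧
      ∀ k, (hk : k < u.length) → r (k+1) ∈ δ (r k) (u[k]'hk) := by
  induction u generalizing p with
  | nil =>
    obtain rfl : p = q := h
    exact ⟨fun _ => p, rfl, fun n _ => rfl, fun k hk => by simp at hk⟩
  | cons a w ih =>
    obtain ⟨r1, hr1, hreach⟩ := h
    obtain ⟨r, h0, hend, hstep⟩ := ih hreach
    refine ⟨fun n => Nat.rec p (fun m _ => r m) n, rfl, ?_, ?_⟩
    · intro n hn
      simp only [List.length_cons] at hn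
      obtain ⟨m, rfl⟩ : ∃ m, n = m + 1 := ⟨n - 1, by omega⟩
      exact hend m (by omega)
    · intro k hk
      cases k with
      | zero => simpa [h0] using hr1
      | succ m =>
        simp only [List.length_cons] at hk
        exact hstep m (by omega)

/-- from a run to `Reach` on a segment -/
theorem reach_of_run {s : ℕ → A} {r : ℕ → Q} (hr : ∀ n, r (n+1) ∈ δ (r n) (s n))
    {a b : ℕ} (hab : a ≤ b) : Reach δ (r a) (seg s a b) (r b) := by
  obtain ⟨n, rfl⟩ : ∃ n, b = a + n := ⟨b - a, by omega⟩
  clear hab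
  induction n generalizing a with
  | zero => simp [seg, Reach]
  | succ m ih =>
    rw [seg_cons s (by omega)]
    exact ⟨r (a+1), hr a, by have := @ih (a+1); rwa [show a+1+m = a+(m+1) by omega] at this⟩

theorem reachF_of_run {s : ℕ → A} {r : ℕ → Q} (hr : ∀ n, r (n+1) ∈ δ (r n) (s n))
    {a b j : ℕ} (haj : a ≤ j) (hjb : j ≤ b) (hj : r j ∈ Fs) :
    ReachF δ Fs (r a) (seg s a b) (r b) :=
  ⟨seg s a j, seg s j b, r j, (seg_append s haj hjb).symm, hj,
    reach_of_run hr haj, reach_of_run hr hjb⟩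

/-- a run for a `ReachF` loop block : from `p` to `p` visiting `Fs` -/
theorem run_of_reachF {p q : Q} {w : List A} (h : ReachF δ Fs p w q) :
    ∃ r : ℕ → Q, r 0 = p ∧ (∀ n, w.length ≤ n → r n = q) ∧
      (∀ k, (hk : k < w.length) → r (k+1) ∈ δ (r k) (w[k]'hk)) ∧
      ∃ j ≤ w.length, r j ∈ Fs := by
  obtain ⟨u, v, rf, rfl, hrf, hu, hv⟩ := h
  obtain ⟨rU, hU0, hUe, hUs⟩ := run_of_reach hu
  obtain ⟨rV, hV0, hVe, hVs⟩ := run_of_reach hv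
  refine ⟨fun n => if n < u.length then rU n else rV (n - u.length), ?_, ?_, ?_, ?_⟩
  · rcases Nat.eq_zero_or_pos u.length with h | h
    · simp [h, hV0, ← hUe 0 (by omega), hU0]
    · simp [h, hU0]
  · intro n hn
    simp only [List.length_append] at hn
    dsimp only
    rw [if_neg (by omega)]
    exact hVe _ (by omega)
  · intro k hk
    simp only [List.length_append] at hk
    dsimp only
    by_cases h1 : k < u.length
    · have hval : (u ++ v)[k]'(by simpa using hk) = u[k]'h1 := List.getElem_append_left h1
      rw [hval, if_pos h1]
      by_cases h2 : k + 1 < u.length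
      · rw [if_pos h2]; exact hUs k h1
      · rw [if_neg h2, show k + 1 - u.length = 0 by omega, hV0,
          ← hUe (k+1) (by omega)]
        exact hUs k h1
    · have hval : (u ++ v)[k]'(by simpa using hk) = v[k - u.length]'(by omega) := by
        rw [List.getElem_append_right (by omega)]
      rw [hval, if_neg h1, if_neg (by omega), show k + 1 - u.length = (k - u.length) + 1 by omega]
      exact hVs (k - u.length) (by omega)
  · refine ⟨u.length, by simp, ?_⟩
    dsimp only
    rw [if_neg (by omega)]
    simpa [hV0] using hrf

/-! Section 5 : stitching runs along blocks -/

theorem infinite_of_exists_ge {S : Set ℕ} (h : ∀ m, ∃ n, m ≤ n ∧ n ∈ S) : S.Infinite := by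
  by_contra hfin
  rw [Set.not_infinite] at hfin
  obtain ⟨b, hb⟩ := hfin.bddAbove
  obtain ⟨n, hn, hnS⟩ := h (b+1)
  exact absurd (hb hnS) (by omega)

theorem run_stitch {f : ℕ → List A} (hf : ∀ i, 1 ≤ i → f i ≠ []) {p : Q} {q0 : Q}
    (h0 : Reach δ q0 (f 0) p) (hi : ∀ i, 1 ≤ i → ReachF δ Fs p (f i) p) :
    prodWord f ∈ LangOf δ q0 Fs := by
  obtain ⟨s, hps, hlet⟩ := prodWord_eq_ofStream f hf
  rw [hps, ofStream_mem_LangOf]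
  have hR : ∀ i, ∃ r : ℕ → Q, (r 0 = if i = 0 then q0 else p) ∧
      (∀ n, (f i).length ≤ n → r n = p) ∧
      (∀ k, (hk : k < (f i).length) → r (k+1) ∈ δ (r k) ((f i)[k]'hk)) ∧
      (1 ≤ i → ∃ j ≤ (f i).length, r j ∈ Fs) := by
    intro i
    rcases Nat.eq_zero_or_pos i with rfl | hipos
    · obtain ⟨r, h1, h2, h3⟩ := run_of_reach h0
      exact ⟨r, by simpa using h1, h2, h3, by omega⟩
    · obtain ⟨r, h1, h2, h3, h4⟩ := run_of_reachF (hi i hipos)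
      exact ⟨r, by simp [Nat.pos_iff_ne_zero.1 hipos, h1], h2, h3, fun _ => h4⟩
  choose R hR0 hRe hRs hRF using hR
  have hlen : ∀ i, 1 ≤ i → 1 ≤ (f i).length := by
    intro i hi1
    have hne := hf i hi1
    cases h : f i with
    | nil => exact absurd h hne
    | cons a l => simp [h]
  set I : ℕ → ℕ := fun n => Nat.findGreatest (fun i => bnd f i ≤ n) (n+1) with hIdef
  have hbnd0 : bnd f 0 = 0 := rfl
  have hBI1 : ∀ n, bnd f (I n) ≤ n := by
    intro n
    have h := Nat.findGreatest_spec (P := fun i => bnd f i ≤ n) (m := 0) (n := n+1)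
      (by omega) (by omega)
    exact h
  have hle : ∀ i n, bnd f i ≤ n → i ≤ n + 1 := by
    intro i n h
    rcases Nat.eq_zero_or_pos i with rfl | hipos
    · omega
    · have := bnd_lower f hf (i-1)
      have hmono := bnd_mono f (show i - 1 + 1 ≤ i by omega)
      omega
  have hBI2 : ∀ n, n < bnd f (I n + 1) := by
    intro n
    by_contra hcon
    push_neg at hcon
    have h1 : I n + 1 ≤ I n := Nat.le_findGreatest (hle _ n hcon) hcon
    omega
  have hIeq : ∀ i n, bnd f i ≤ n → n < bnd f (i+1) → I n = i := by
    intro i n h1 h2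
    have hge : i ≤ I n := Nat.le_findGreatest (hle i n h1) h1
    rcases Nat.eq_or_lt_of_le hge with h | h
    · omega
    · exfalso
      have h3 := bnd_mono f (show i + 1 ≤ I n by omega)
      have := hBI1 n
      omega
  have hbsucc : ∀ i, 1 ≤ i → bnd f i < bnd f (i+1) := by
    intro i h
    rw [bnd_succ]
    have := hlen i h
    omega
  set r : ℕ → Q := fun n => R (I n) (n - bnd f (I n)) with hrdef
  have hk : ∀ n, n - bnd f (I n) < (f (I n)).length := by
    intro n
    have h1 := hBI1 n
    have h2 := hBI2 n
    have h3 := bnd_succ f (I n)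
    omega
  have hsval : ∀ n, (f (I n))[n - bnd f (I n)]'(hk n) = s n := by
    intro n
    have h2 := (hlet (I n) (n - bnd f (I n)) (hk n)).2
    rw [List.getElem?_eq_getElem (hk n)] at h2
    rw [show bnd f (I n) + (n - bnd f (I n)) = n from by have := hBI1 n; omega] at h2
    exact Option.some.inj h2
  have hbp : ∀ i, 1 ≤ i → r (bnd f i) = p := by
    intro i h1
    have hIe : I (bnd f i) = i := hIeq i _ le_rfl (hbsucc i h1)
    show R (I (bnd f i)) (bnd f i - bnd f (I (bnd f i))) = p
    rw [hIe, Nat.sub_self, hR0]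
    simp [show i ≠ 0 by omega]
  refine ⟨r, ?_, ?_, ?_⟩
  · have h0' := hBI1 0
    rcases Nat.eq_zero_or_pos (I 0) with h | h
    · show R (I 0) (0 - bnd f (I 0)) = q0
      rw [h, hbnd0, hR0]
      simp
    · have hb1 : bnd f 1 = 0 := by
        have h2 : bnd f 1 ≤ bnd f (I 0) := bnd_mono f (show 1 ≤ I 0 by omega)
        omega
      have hf0 : f 0 = [] := by
        have h2 := bnd_succ f 0
        rw [hbnd0, hb1] at *
        exact List.length_eq_zero_iff.1 (by omega)
      have hpq : q0 = p := by rw [hf0] at h0; exact h0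
      show R (I 0) (0 - bnd f (I 0)) = q0
      rw [show bnd f (I 0) = 0 from by omega, hR0]
      simp [show I 0 ≠ 0 by omega, hpq]
  · intro n
    have h1 := hBI1 n
    have h2 := hBI2 n
    have hkn := hk n
    have hrn : r n = R (I n) (n - bnd f (I n)) := rfl
    have hnext : r (n+1) = R (I n) (n + 1 - bnd f (I n)) := by
      rcases Nat.lt_or_ge (n+1) (bnd f (I n + 1)) with hlt | hge
      · have hIe : I (n+1) = I n := hIeq (I n) (n+1) (by omega) hlt
        show R (I (n+1)) (n+1 - bnd f (I (n+1))) = _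
        rw [hIe]
      · have heq : n + 1 = bnd f (I n + 1) := by omega
        have hp1 : r (n+1) = p := by rw [heq]; exact hbp (I n + 1) (by omega)
        rw [hp1]
        symm
        apply hRe
        have := bnd_succ f (I n)
        omega
    rw [hnext, show n + 1 - bnd f (I n) = (n - bnd f (I n)) + 1 from by omega, hrn,
      ← hsval n]
    exact hRs (I n) _ hkn
  · apply infinite_of_exists_ge
    intro m
    obtain ⟨jj, hjj, hjjF⟩ := hRF (m+2) (by omega)
    have hblow : m + 1 ≤ bnd f (m+2) := bnd_lower f hf (m+1)
    have hb23 : bnd f (m+2) < bnd f (m+3) := hbsucc (m+2) (by omega)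
    rcases Nat.lt_or_ge jj (f (m+2)).length with hlt | hge
    · refine ⟨bnd f (m+2) + jj, by omega, ?_⟩
      have hIe : I (bnd f (m+2) + jj) = m+2 :=
        hIeq (m+2) _ (by omega) (by rw [bnd_succ f (m+2)]; omega)
      have heq : r (bnd f (m+2) + jj) = R (m+2) jj := by
        show R (I (bnd f (m+2) + jj)) _ = _
        rw [hIe]
        congr 1
        omega
      show r (bnd f (m+2) + jj) ∈ Fs
      rw [heq]
      exact hjjF
    · have hjje : jj = (f (m+2)).length := by omega
      refine ⟨bnd f (m+3), by omega, ?_⟩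
      have h1 : r (bnd f (m+3)) = p := hbp (m+3) (by omega)
      have h2 : R (m+2) jj = p := hRe (m+2) jj (by omega)
      show r (bnd f (m+3)) ∈ Fs
      rw [h1, ← h2]
      exact hjjF

/-! Section 6 : infinite pigeonhole and Ramsey for pairs -/

theorem exists_strictMono_in {S : Set ℕ} (h : S.Infinite) :
    ∃ e : ℕ → ℕ, StrictMono e ∧ ∀ n, e n ∈ S := by
  have hnxt : ∀ a : ℕ, ∃ b, b ∈ S ∧ a < b := fun a => h.exists_gt a
  choose nxt hmem hlt using hnxt
  refine ⟨fun n => Nat.rec (nxt 0) (fun _ prev => nxt prev) n, ?_, ?_⟩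
  · apply strictMono_nat_of_lt_succ
    intro n
    exact hlt _
  · intro n
    cases n with
    | zero => exact hmem 0
    | succ m => exact hmem _

theorem pigeon_infinite {κ : Type*} [Finite κ] {S : Set ℕ} (h : S.Infinite) (c : ℕ → κ) :
    ∃ k, {n ∈ S | c n = k}.Infinite := by
  by_contra hcon
  push_neg at hcon
  have hcon : ∀ k, {n ∈ S | c n = k}.Finite := hcon
  have : S ⊆ ⋃ k, {n ∈ S | c n = k} := by
    intro n hn
    exact Set.mem_iUnion.2 ⟨c n, hn, rfl⟩
  exact h (Set.Finite.subset (Set.finite_iUnion hcon) this)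

theorem ramsey_pairs {κ : Type*} [Finite κ] (c : ℕ → ℕ → κ) :
    ∃ (g : ℕ → ℕ) (d : κ), StrictMono g ∧ ∀ i j, i < j → c (g i) (g j) = d := by
  have hstep : ∀ S : {S : Set ℕ // S.Infinite},
      ∃ p : ℕ × {T : Set ℕ // T.Infinite} × κ,
        p.1 ∈ S.1 ∧ p.2.1.1 ⊆ S.1 ∧ ∀ y ∈ p.2.1.1, p.1 < y ∧ c p.1 y = p.2.2 := by
    rintro ⟨S, hS⟩
    obtain ⟨x, hx⟩ := hS.nonempty
    have h1 : {y ∈ S | x < y}.Infinite := by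
      have he : {y ∈ S | x < y} = S \ Set.Iic x := by
        ext y
        simp [not_le]
      rw [he]
      exact hS.diff (Set.finite_Iic x)
    obtain ⟨k, hk⟩ := pigeon_infinite h1 (c x)
    refine ⟨⟨x, ⟨_, hk⟩, k⟩, hx, ?_, ?_⟩
    · rintro y ⟨⟨hy, _⟩, _⟩
      exact hy
    · rintro y ⟨⟨_, hy⟩, hc⟩
      exact ⟨hy, hc⟩
  choose F hF1 hF2 hF3 using hstep
  set seq : ℕ → {S : Set ℕ // S.Infinite} :=
    fun n => Nat.rec ⟨Set.univ, Set.infinite_univ⟩ (fun _ S => (F S).2.1) n with hseq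
  set x : ℕ → ℕ := fun n => (F (seq n)).1 with hx
  set col : ℕ → κ := fun n => (F (seq n)).2.2 with hcol
  have hseqsucc : ∀ n, seq (n+1) = (F (seq n)).2.1 := fun n => rfl
  have hchain : ∀ n m, n + 1 ≤ m → (seq m).1 ⊆ (seq (n+1)).1 := by
    intro n m hm
    induction m with
    | zero => omega
    | succ j ih =>
      rcases Nat.eq_or_lt_of_le hm with h | h
      · rw [h]
      · refine subset_trans ?_ (ih (by omega))
        rw [hseqsucc j]
        exact hF2 (seq j)
  have hmemx : ∀ m, x m ∈ (seq m).1 := fun m => hF1 (seq m)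
  have hprop : ∀ n m, n < m → x n < x m ∧ c (x n) (x m) = col n := by
    intro n m hnm
    have : x m ∈ (seq (n+1)).1 := hchain n m hnm (hmemx m)
    rw [hseqsucc n] at this
    exact hF3 (seq n) _ this
  have hxmono : StrictMono x := by
    apply strictMono_nat_of_lt_succ
    intro n
    exact (hprop n (n+1) (by omega)).1
  obtain ⟨d, hd⟩ := pigeon_infinite (Set.infinite_univ (α := ℕ)) col
  have hd' : {n | col n = d}.Infinite := by
    have : {n ∈ Set.univ | col n = d} = {n | col n = d} := by ext; simp
    rwa [this] at hd
  obtain ⟨e, hemono, hemem⟩ := exists_strictMono_in hd'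
  refine ⟨x ∘ e, d, hxmono.comp hemono, ?_⟩
  intro i j hij
  have h1 := (hprop (e i) (e j) (hemono hij)).2
  have h2 : col (e i) = d := hemem i
  simpa [h2] using h1

/-! Section 7 : saturation -/

theorem omega_saturated [Finite Q] {C D : Set (List A)} (hC : IsClass δ Fs C)
    (hD : IsClass δ Fs D) (hCD : classMul δ Fs C D = C) (hDD : classMul δ Fs D D = D)
    {f f' : ℕ → List A} (hf0 : f 0 ∈ C) (hfD : ∀ i, 1 ≤ i → f i ∈ D)
    (hf0' : f' 0 ∈ C) (hfD' : ∀ i, 1 ≤ i → f' i ∈ D)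
    (hacc : prodWord f ∈ LangOf δ q0 Fs) : prodWord f' ∈ LangOf δ q0 Fs := by
  obtain ⟨wc, hwc⟩ := hC
  obtain ⟨wd, hwd⟩ := hD
  rcases class_nil_or ⟨wd, hwd⟩ with hDnil | hDne
  · -- D = {[]} : only finite words
    have hnil : ∀ i, 1 ≤ i → f i = [] := fun i hi => by
      have := hfD i hi; rw [hDnil] at this; exact this
    have hnil' : ∀ i, 1 ≤ i → f' i = [] := fun i hi => by
      have := hfD' i hi; rw [hDnil] at this; exact this
    rw [prodWord_eq_ofList f hnil, ofList_mem_LangOf] at hacc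
    rw [prodWord_eq_ofList f' hnil', ofList_mem_LangOf]
    obtain ⟨q, hq, hreach⟩ := hacc
    exact ⟨q, hq, ((mem_wordClass_congr (hwc ▸ hf0) (hwc ▸ hf0') q0 q).1).mp hreach⟩
  · -- D consists of nonempty words : only infinite words
    have hfne : ∀ i, 1 ≤ i → f i ≠ [] := fun i hi => hDne _ (hfD i hi)
    have hfne' : ∀ i, 1 ≤ i → f' i ≠ [] := fun i hi => hDne _ (hfD' i hi)
    obtain ⟨s, hps, hlet⟩ := prodWord_eq_ofStream f hfne
    rw [hps, ofStream_mem_LangOf] at hacc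
    obtain ⟨r, hr0, hrs, hrF⟩ := hacc
    have hmonob := bnd_mono f
    have hbnd0 : bnd f 0 = 0 := rfl
    have hseg : ∀ i, f i = seg s (bnd f i) (bnd f (i+1)) := by
      intro i
      have hlength : (f i).length = (seg s (bnd f i) (bnd f (i+1))).length := by
        rw [seg_length, bnd_succ]
        omega
      apply List.ext_getElem hlength
      intro k h1 h2
      rw [seg_getElem s (by rw [bnd_succ] at h2 ⊢; simpa using h2)]
      have h3 := (hlet i k h1).2
      rw [List.getElem?_eq_getElem h1] at h3
      exact Option.some.inj h3
    have hpre : ∀ j, 1 ≤ j → seg s (bnd f 0) (bnd f j) ∈ C := by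
      intro j hj
      induction j with
      | zero => omega
      | succ i ih =>
        rcases Nat.eq_zero_or_pos i with rfl | hi
        · rw [← hseg 0]
          exact hf0
        · rw [← seg_append s (hmonob (show 0 ≤ i by omega)) (hmonob (show i ≤ i+1 by omega))]
          exact mem_of_append_mem ⟨wc, hwc⟩ ⟨wd, hwd⟩ hCD (ih hi)
            (by rw [← hseg i]; exact hfD i hi)
    have hmid : ∀ j j', 1 ≤ j → j < j' → seg s (bnd f j) (bnd f j') ∈ D := by
      intro j j' hj hjj'
      induction j' with
      | zero => omega
      | succ i ih =>
        rcases Nat.lt_or_ge j i with h | h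
        · rw [← seg_append s (hmonob (le_of_lt h)) (hmonob (show i ≤ i+1 by omega))]
          exact mem_of_append_mem ⟨wd, hwd⟩ ⟨wd, hwd⟩ hDD (ih h)
            (by rw [← hseg i]; exact hfD i (by omega))
        · have hji : j = i := by omega
          subst hji
          rw [← hseg j]
          exact hfD j hj
    -- choose boundary indices with an accepting visit in between
    have hstep2 : ∀ j : ℕ, ∃ j', j < j' ∧ ∃ n, bnd f j ≤ n ∧ n ≤ bnd f j' ∧ r n ∈ Fs := by
      intro j
      obtain ⟨n, hnF, hn⟩ := hrF.exists_gt (bnd f j)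
      refine ⟨max (j+1) (n+2), by omega, n, le_of_lt hn, ?_, hnF⟩
      have h1 : n+1 ≤ bnd f (n+2) := bnd_lower f hfne (n+1)
      have h2 : bnd f (n+2) ≤ bnd f (max (j+1) (n+2)) := hmonob (le_max_right _ _)
      omega
    choose nxt hlt hvisit using hstep2
    set e : ℕ → ℕ := fun t => Nat.rec 1 (fun _ prev => nxt prev) t with he
    have hesucc : ∀ t, e (t+1) = nxt (e t) := fun t => rfl
    have hemono : StrictMono e := by
      apply strictMono_nat_of_lt_succ
      intro t
      rw [hesucc]
      exact hlt (e t)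
    have he1 : ∀ t, 1 ≤ e t := by
      intro t
      cases t with
      | zero => exact le_rfl
      | succ u => have := hemono (show 0 < u + 1 by omega); omega
    obtain ⟨p, hp⟩ := pigeon_infinite (Set.infinite_univ (α := ℕ))
      (fun t => r (bnd f (e t)))
    obtain ⟨t, ht⟩ := hp.nonempty
    obtain ⟨t', ht', htt'⟩ := hp.exists_gt t
    have hpt : r (bnd f (e t)) = p := ht.2
    have hpt' : r (bnd f (e t')) = p := ht'.2
    obtain ⟨n, hn1, hn2, hnF⟩ := hvisit (e t)
    have hn2' : n ≤ bnd f (e t') := by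
      have h1 : e (t+1) ≤ e t' := hemono.monotone (Nat.succ_le_of_lt htt')
      have h2 : bnd f (nxt (e t)) ≤ bnd f (e t') := hmonob (by rw [← hesucc t]; exact h1)
      exact le_trans hn2 h2
    have hReachp : Reach δ q0 (seg s (bnd f 0) (bnd f (e t))) p := by
      have h := reach_of_run (δ := δ) hrs (show bnd f 0 ≤ bnd f (e t) from hmonob (by omega))
      rwa [show bnd f 0 = 0 from rfl, hr0, hpt] at h
    have hReachFp : ReachF δ Fs p (seg s (bnd f (e t)) (bnd f (e t'))) p := by
      have h := reachF_of_run (δ := δ) (Fs := Fs) hrs hn1 hn2' hnF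
      rwa [hpt, hpt'] at h
    have hpreC : seg s (bnd f 0) (bnd f (e t)) ∈ C := hpre (e t) (he1 t)
    have hmidD : seg s (bnd f (e t)) (bnd f (e t')) ∈ D :=
      hmid (e t) (e t') (he1 t) (hemono htt')
    have hR0' : Reach δ q0 (f' 0) p :=
      ((mem_wordClass_congr (hwc ▸ hpreC) (hwc ▸ hf0') q0 p).1).mp hReachp
    have hRi' : ∀ i, 1 ≤ i → ReachF δ Fs p (f' i) p := fun i hi =>
      ((mem_wordClass_congr (hwd ▸ hmidD) (hwd ▸ hfD' i hi) p p).2).mp hReachFp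
    exact run_stitch hfne' hR0' hRi'

/-! Section 9 : factorization of an arbitrary word -/

theorem stable_none {w : Word A} {n m : ℕ} (h : w.1 n = none) (hm : n ≤ m) : w.1 m = none := by
  obtain ⟨d, rfl⟩ : ∃ d, m = n + d := ⟨m - n, by omega⟩
  clear hm
  induction d with
  | zero => exact h
  | succ i ih => exact w.2 _ ih

theorem color_eq_sim {s : ℕ → A}
    {i j i' j' : ℕ}
    (h : ((fun p q => Reach δ p (seg s i j) q, fun p q => ReachF δ Fs p (seg s i j) q) :
        (Q → Q → Prop) × (Q → Q → Prop)) =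
      (fun p q => Reach δ p (seg s i' j') q, fun p q => ReachF δ Fs p (seg s i' j') q)) :
    Sim δ Fs (seg s i j) (seg s i' j') := by
  intro p q
  have h1 := congrFun (congrFun (congrArg Prod.fst h) p) q
  have h2 := congrFun (congrFun (congrArg Prod.snd h) p) q
  exact ⟨iff_of_eq h1, iff_of_eq h2⟩

theorem seg_ne_nil {s : ℕ → A} {a b : ℕ} (h : a < b) : seg s a b ≠ [] := by
  intro hc
  have := seg_length s a b
  rw [hc] at this
  simp at this
  omega

theorem exists_concPair [Finite Q] (δ : Q → A → Set Q) (Fs : Set Q) (w : Word A) :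
    ∃ p : CPair δ Fs, w ∈ concPair p := by
  by_cases hfin : ∃ n, w.1 n = none
  · -- finite word
    obtain ⟨n0, hn0⟩ := hfin
    -- least index with none
    have hdec : ∀ n, w.1 n = none ∨ ∃ a, w.1 n = some a := by
      intro n
      cases h : w.1 n with
      | none => exact Or.inl rfl
      | some a => exact Or.inr ⟨a, rfl⟩
    classical
    let P : ℕ → Prop := fun n => w.1 n = none
    have hex : ∃ n, P n := ⟨n0, hn0⟩
    let N := Nat.find hex
    have hN : w.1 N = none := Nat.find_spec hex
    have hlt : ∀ k, k < N → ∃ a, w.1 k = some a := by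
      intro k hk
      rcases hdec k with h | h
      · exact absurd h (Nat.find_min hex hk)
      · exact h
    choose av hav using hlt
    let l : List A := List.ofFn (fun k : Fin N => av k.1 k.2)
    have hwl : w = ofList l := by
      apply word_ext
      intro n
      show w.1 n = l[n]?
      by_cases hn : n < N
      · rw [List.getElem?_eq_getElem (by simpa [l] using hn)]
        have : l[n]'(by simpa [l] using hn) = av n hn := by
          simp [l]
        rw [this]
        exact hav n hn
      · rw [List.getElem?_eq_none_iff.2 (by simpa [l] using hn)]
        exact stable_none hN (by omega)
    refine ⟨⟨(wordClass δ Fs l, wordClass δ Fs []), ⟨l, rfl⟩, ⟨[], rfl⟩, ?_, ?_⟩, ?_⟩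
    · rw [classMul_wordClass, List.append_nil]
    · rw [classMul_wordClass, List.append_nil]
    · refine ⟨fun i => if i = 0 then l else [], by simpa using mem_wordClass_self l, ?_, ?_⟩
      · intro i hi
        show (if i = 0 then l else []) ∈ wordClass δ Fs []
        rw [if_neg (show ¬ i = 0 by omega)]
        exact mem_wordClass_self []
      · rw [prodWord_eq_ofList _ (fun i hi => by rw [if_neg (by omega)])]
        simpa using hwl
  · -- infinite word
    push_neg at hfin
    have hsome : ∀ n, ∃ a, w.1 n = some a := by
      intro n
      cases h : w.1 n with
      | none => exact absurd h (hfin n)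
      | some a => exact ⟨a, rfl⟩
    choose s hs using hsome
    -- Ramsey on segment behaviours
    set c : ℕ → ℕ → (Q → Q → Prop) × (Q → Q → Prop) := fun i j =>
      (fun p q => Reach δ p (seg s i j) q, fun p q => ReachF δ Fs p (seg s i j) q) with hc
    obtain ⟨g, d, hgmono, hghom⟩ := ramsey_pairs c
    -- refine so that prefix colours are constant too
    obtain ⟨d0, hd0⟩ := pigeon_infinite (Set.infinite_univ (α := ℕ))
      (fun t => c 0 (g (t+1)))
    have hd0' : {t | c 0 (g (t+1)) = d0}.Infinite := by
      have he : {t ∈ Set.univ | c 0 (g (t+1)) = d0} = {t | c 0 (g (t+1)) = d0} := by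
        ext; simp
      rwa [he] at hd0
    obtain ⟨e, hemono, hemem⟩ := exists_strictMono_in hd0'
    set h : ℕ → ℕ := fun t => g (e t + 1) with hh
    have hhmono : StrictMono h := by
      intro a b hab
      exact hgmono (by have := hemono hab; omega)
    have hh1 : ∀ t, 1 ≤ h t := by
      intro t
      have h1 : g 0 < g (e t + 1) := hgmono (show 0 < e t + 1 by omega)
      show 1 ≤ g (e t + 1)
      omega
    have hpaircol : ∀ t t', t < t' → c (h t) (h t') = d := by
      intro t t' htt'
      exact hghom _ _ (by have := hemono htt'; omega)
    have hprecol : ∀ t, c 0 (h t) = d0 := fun t => hemem t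
    -- the blocks
    set b0 : ℕ → ℕ := fun i => match i with | 0 => 0 | (i+1) => h i with hb0
    have hb0mono : ∀ i, b0 i < b0 (i+1) := by
      intro i
      cases i with
      | zero => exact hh1 0
      | succ j => exact hhmono (by omega)
    set f : ℕ → List A := fun i => seg s (b0 i) (b0 (i+1)) with hfdef
    have hfne : ∀ i, 1 ≤ i → f i ≠ [] := fun i _ => seg_ne_nil (hb0mono i)
    have hbndf : ∀ i, bnd f i = b0 i := by
      intro i
      induction i with
      | zero => rfl
      | succ j ih =>
        rw [bnd_succ, ih]
        show b0 j + (seg s (b0 j) (b0 (j+1))).length = b0 (j+1)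
        rw [seg_length]
        have := hb0mono j
        omega
    have hwf : w = prodWord f := by
      apply word_ext
      intro n
      obtain ⟨i, hi1, hi2⟩ : ∃ i, bnd f i ≤ n ∧ n < bnd f (i+1) := by
        -- locator
        have hub : ∀ m, m ≤ bnd f (m+1) := bnd_lower f hfne
        by_contra hcon
        push_neg at hcon
        have : ∀ i, bnd f i ≤ n → bnd f (i+1) ≤ n := fun i h => hcon i h
        have hall : ∀ i, bnd f i ≤ n := by
          intro i
          induction i with
          | zero => show bnd f 0 ≤ n; rw [show bnd f 0 = 0 from rfl]; omega
          | succ j ih => exact this j ih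
        have h1 := hall (n+2)
        have h2 : n + 1 ≤ bnd f (n+2) := hub (n+1)
        omega
      rw [hs n, prodWord_apply_block f hi1 hi2]
      have hlen : n - bnd f i < (f i).length := by
        have : (f i).length = bnd f (i+1) - bnd f i := by
          show (seg s (b0 i) (b0 (i+1))).length = _
          rw [seg_length, hbndf, hbndf]
        omega
      rw [List.getElem?_eq_getElem hlen]
      show _ = some ((seg s (b0 i) (b0 (i+1)))[n - bnd f i]'(by
        have := hlen
        simpa [hfdef] using this))
      rw [seg_getElem s (by
        have h3 : (f i).length = b0 (i+1) - b0 i := by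
          show (seg s (b0 i) (b0 (i+1))).length = _
          rw [seg_length]
        rw [h3] at hlen
        exact hlen)]
      have hbb := hbndf i
      have hn2 : b0 i + (n - bnd f i) = n := by omega
      rw [hn2]
    -- the pair
    set u : List A := seg s (h 0) (h 1) with hu
    have hsimblocks : ∀ i, 1 ≤ i → Sim δ Fs u (f i) := by
      intro i hi
      have hcol : c (h 0) (h 1) = c (h (i-1)) (h i) := by
        rw [hpaircol 0 1 (by omega), hpaircol (i-1) i (by omega)]
      have : f i = seg s (h (i-1)) (h i) := by
        show seg s (b0 i) (b0 (i+1)) = _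
        obtain ⟨j, rfl⟩ : ∃ j, i = j + 1 := ⟨i - 1, by omega⟩
        simp [hb0]
      rw [this]
      exact color_eq_sim (by exact hcol)
    have hfD : ∀ i, 1 ≤ i → f i ∈ wordClass δ Fs u := by
      intro i hi
      exact Or.inr ⟨seg_ne_nil (show h 0 < h 1 from hhmono (by omega)), hfne i hi,
        hsimblocks i hi⟩
    have hf0mem : f 0 ∈ wordClass δ Fs (f 0) := mem_wordClass_self _
    have hf0u : wordClass δ Fs (f 0 ++ u) = wordClass δ Fs (f 0) := by
      have h01 : h 0 < h 1 := hhmono (show (0:ℕ) < 1 by omega)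
      have h1 : f 0 ++ u = seg s 0 (h 1) := by
        show seg s (b0 0) (b0 1) ++ seg s (h 0) (h 1) = _
        have e1 : b0 0 = 0 := rfl
        have e2 : b0 1 = h 0 := rfl
        rw [e1, e2]
        exact seg_append s (by have := hh1 0; omega) (le_of_lt h01)
      have h2 : f 0 = seg s 0 (h 0) := rfl
      rw [h1, h2]
      apply wordClass_eq_of_mem
      have hcol : c 0 (h 0) = c 0 (h 1) := by rw [hprecol 0, hprecol 1]
      have hsim : Sim δ Fs (seg s 0 (h 0)) (seg s 0 (h 1)) := color_eq_sim hcol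
      exact Or.inr ⟨seg_ne_nil (by have := hh1 0; omega),
        seg_ne_nil (by have := hh1 1; omega), hsim⟩
    have h01 : h 0 < h 1 := hhmono (show (0:ℕ) < 1 by omega)
    have h12 : h 1 < h 2 := hhmono (show (1:ℕ) < 2 by omega)
    have hune : u ≠ [] := seg_ne_nil h01
    have huu : wordClass δ Fs (u ++ u) = wordClass δ Fs u := by
      apply wordClass_eq_of_mem
      refine Or.inr ⟨hune, by
        intro hcon
        rcases List.append_eq_nil_iff.1 hcon with ⟨hc, _⟩
        exact hune hc, ?_⟩
      -- Sim u (u ++ u)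
      have hc12 : c (h 0) (h 1) = c (h 1) (h 2) := by
        rw [hpaircol 0 1 (by omega), hpaircol 1 2 (by omega)]
      have h1 : Sim δ Fs u (seg s (h 1) (h 2)) := color_eq_sim hc12
      have h2 : Sim δ Fs (u ++ u) (seg s (h 0) (h 1) ++ seg s (h 1) (h 2)) :=
        sim_append (sim_refl u) h1
      have h3 : seg s (h 0) (h 1) ++ seg s (h 1) (h 2) = seg s (h 0) (h 2) :=
        seg_append s (le_of_lt h01) (le_of_lt h12)
      rw [h3] at h2
      have hc02 : c (h 0) (h 2) = c (h 0) (h 1) := by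
        rw [hpaircol 0 2 (by omega), hpaircol 0 1 (by omega)]
      have h4 : Sim δ Fs (seg s (h 0) (h 2)) u := color_eq_sim hc02
      exact sim_symm (sim_trans h2 h4)
    refine ⟨⟨(wordClass δ Fs (f 0), wordClass δ Fs u), ⟨f 0, rfl⟩, ⟨u, rfl⟩, ?_, ?_⟩, ?_⟩
    · rw [classMul_wordClass]
      exact hf0u
    · rw [classMul_wordClass]
      exact huu
    · exact ⟨f, hf0mem, hfD, hwf⟩

/-! Section 10 : saturation of concPair languages and the main theorem -/

theorem concPair_saturated [Finite Q] {q0 : Q} (p : CPair δ Fs)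
    (h : (concPair p ∩ LangOf δ q0 Fs).Nonempty) : concPair p ⊆ LangOf δ q0 Fs := by
  obtain ⟨w, hw, hwL⟩ := h
  intro w' hw'
  obtain ⟨f, hf0, hfD, rfl⟩ := hw
  obtain ⟨f', hf0', hfD', rfl⟩ := hw'
  obtain ⟨hC, hD, hCD, hDD⟩ := p.2
  exact omega_saturated hC hD hCD hDD hf0 hfD hf0' hfD' hwL

end Aux

/-- completeness of the abstraction with respect to the policy automaton:
`γ_{≤ω}(α_{≤ω}(L)) ⊆ L(𝔄)` iff `L ⊆ L(𝔄)`. -/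
theorem abstraction_complete {Q A : Type*} [Finite Q] [Finite A]
    (δ : Q → A → Set Q) (q0 : Q) (Fs : Set Q) (L : Set (Word A)) :
    gammaOmega (alphaOmega δ Fs L) ⊆ LangOf δ q0 Fs ↔ L ⊆ LangOf δ q0 Fs := by
  constructor
  · intro h w hwL
    obtain ⟨p, hp⟩ := exists_concPair δ Fs w
    apply h
    have hpF : p ∈ frakF δ Fs L := ⟨w, hp, hwL⟩
    refine Set.mem_biUnion ?_ hp
    apply Set.mem_iUnion.2
    refine ⟨0, ?_⟩
    simp only [Function.iterate_succ_apply', Function.iterate_zero_apply]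
    exact ⟨w, hp, Set.mem_biUnion hpF hp⟩
  · intro hL w hw
    obtain ⟨p, hpC, hpw⟩ := Set.mem_iUnion₂.1 hw
    suffices hS : ∀ n (q : CPair δ Fs),
        q ∈ (fun 𝒲 => frakF δ Fs (frakG 𝒲))^[n+1] (frakF δ Fs L) →
        concPair q ⊆ LangOf δ q0 Fs by
      obtain ⟨n, hn⟩ := Set.mem_iUnion.1 hpC
      exact hS n p hn hpw
    intro n
    induction n with
    | zero =>
      intro q hq
      simp only [Function.iterate_succ_apply', Function.iterate_zero_apply] at hq
      apply concPair_saturated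
      obtain ⟨w', hw1, hw2⟩ := hq
      obtain ⟨p', hp'1, hp'2⟩ := Set.mem_iUnion₂.1 hw2
      obtain ⟨w'', h1, h2⟩ := hp'1
      have hsub : concPair p' ⊆ LangOf δ q0 Fs :=
        concPair_saturated p' ⟨w'', h1, hL h2⟩
      exact ⟨w', hw1, hsub hp'2⟩
    | succ m ih =>
      intro q hq
      rw [Function.iterate_succ_apply'] at hq
      apply concPair_saturated
      obtain ⟨w', hw1, hw2⟩ := hq
      obtain ⟨p', hp'1, hp'2⟩ := Set.mem_iUnion₂.1 hw2
      exact ⟨w', hw1, ih p' hp'1 hp'2⟩
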